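/- Let R be a commutative G-graded ring. If R is G-graded indecomposable (not isomorphic to a direct product of two nontrivial graded ideals), then any graded maximal ideal M of R is a dominating vertex, so the domination number of Gr_G(R) equals 1. -/

import Mathlib

variable {G R : Type*} [AddGroup G] [DecidableEq G] [CommRing R]

/-- The set of proper nontrivial `G`-graded ideals of `R`. -/
def hV (𝒜 : G → AddSubgroup R) [GradedRing 𝒜] : Set (Ideal R) :=
  {I | I ≠ ⊥ ∧ I ≠ ⊤ ∧ Ideal.IsHomogeneous 𝒜 I}

/-- The intersection graph on a set of ideals: two distinct ideals are
adjacent iff their intersection is nonzero. -/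
def interGraph (V : Set (Ideal R)) : SimpleGraph V where
  Adj I J := I ≠ J ∧ (I : Ideal R) ⊓ (J : Ideal R) ≠ ⊥
  symm := ⟨fun I J ⟨h1, h2⟩ => ⟨h1.symm, by rwa [inf_comm] at h2⟩⟩
  loopless := ⟨fun I ⟨h1, _⟩ => h1 rfl⟩
/-- A dominating set in a simple graph. -/
def IsDominating {V : Type*} (Γ : SimpleGraph V) (D : Set V) : Prop :=
  ∀ v : V, v ∈ D ∨ ∃ u ∈ D, Γ.Adj u v

/-- The domination number of a simple graph, as an extended natural number. -/
noncomputable def domNum {V : Type*} (Γ : SimpleGraph V) : ℕ∞ :=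
  ⨅ D : {D : Set V // IsDominating Γ D}, (D : Set V).encard

/-- If a commutative `G`-graded ring `R` (with at least one proper
nontrivial graded ideal) is `G`-graded indecomposable, then every graded maximal
ideal `M` (viewed as a vertex) is a dominating vertex, and the domination number
of the intersection graph of graded ideals equals 1. -/
theorem stmt6 (𝒜 : G → AddSubgroup R) [GradedRing 𝒜]
    (hne : (hV 𝒜).Nonempty)
    (hind : ¬ ∃ S T : Ideal R, Ideal.IsHomogeneous 𝒜 S ∧ Ideal.IsHomogeneous 𝒜 T ∧
      S ≠ ⊥ ∧ T ≠ ⊥ ∧ S ⊓ T = ⊥ ∧ S ⊔ T = ⊤)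
    (M : Ideal R) (hM : M ∈ hV 𝒜)
    (hmax : ∀ J : Ideal R, Ideal.IsHomogeneous 𝒜 J → M < J → J = ⊤) :
    IsDominating (interGraph (hV 𝒜)) {(⟨M, hM⟩ : hV 𝒜)} ∧
      domNum (interGraph (hV 𝒜)) = 1 := by
  have hdom : IsDominating (interGraph (hV 𝒜)) {(⟨M, hM⟩ : hV 𝒜)} := by
    intro v
    by_cases hv : v = ⟨M, hM⟩
    · exact Or.inl (by simp [hv])
    · refine Or.inr ⟨⟨M, hM⟩, rfl, Ne.symm hv, ?_⟩
      intro hbot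
      obtain ⟨hI0, hIt, hIh⟩ := v.2
      have hIle : ¬ (v : Ideal R) ≤ M := by
        intro hle
        have : M ⊓ (v : Ideal R) = (v : Ideal R) := inf_eq_right.mpr hle
        exact hI0 (this ▸ hbot)
      have hlt : M < M ⊔ (v : Ideal R) := by
        refine lt_of_le_of_ne le_sup_left ?_
        intro heq
        exact hIle (heq ▸ le_sup_right)
      have htop : M ⊔ (v : Ideal R) = ⊤ :=
        hmax _ (hM.2.2.sup hIh) hlt
      exact hind ⟨M, v, hM.2.2, hIh, hM.1, hI0, hbot, htop⟩
  refine ⟨hdom, ?_⟩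
  apply le_antisymm
  · calc domNum (interGraph (hV 𝒜)) ≤ ({(⟨M, hM⟩ : hV 𝒜)} : Set (hV 𝒜)).encard :=
          iInf_le _ (⟨_, hdom⟩ : {D : Set (hV 𝒜) // IsDominating (interGraph (hV 𝒜)) D})
      _ = 1 := Set.encard_singleton _
  · refine le_iInf fun D => ?_
    rw [Set.one_le_encard_iff_nonempty]
    rcases D.2 ⟨M, hM⟩ with h | ⟨u, hu, _⟩
    · exact ⟨_, h⟩
    · exact ⟨u, hu⟩
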